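/- Let U be a 3-dimensional GF(2)-subspace of GF(2^v) such that dim(U ∩ g·U) ≤ 1 for all g ∈ GF(2^v)^× with g·U ≠ U (a good orbit generator). Suppose r, s are two distinct nonzero elements of a codeword W = g·U for some g. Then W is the unique element of the orbit {h·U : h ∈ GF(2^v)^×} containing both r and s, provided the quotients of distinct nonzero elements of U are pairwise distinct. -/
import Mathlib


open Module

lemma card_two_eq_zero_or_one {K : Type*} [Field K] [Fintype K]
    (hq : Fintype.card K = 2) (a : K) : a = 0 ∨ a = 1 := by
  classical
  by_contra hcon
  push_neg at hcon
  have hsub : ({0, 1, a} : Finset K).card ≤ Fintype.card K := Finset.card_le_univ _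
  have : ({0, 1, a} : Finset K).card = 3 := by
    rw [Finset.card_insert_of_notMem (by simp [Ne.symm hcon.1, Ne.symm hcon.2]),
      Finset.card_insert_of_notMem (by simp [Ne.symm hcon.2])]
    simp
  omega

lemma card_two_one_add_one {K : Type*} [Field K] [Fintype K]
    (hq : Fintype.card K = 2) : (1 : K) + 1 = 0 := by
  rcases card_two_eq_zero_or_one hq ((1 : K) + 1) with h | h
  · exact h
  · have : (1 : K) = 0 := by linear_combination h
    exact absurd this one_ne_zero

/-- Erasure decoding for a good Singer orbit: a 3-dimensional subspace `U` of
`GF(2^v)` with pairwise distinct quotients and small intersections with its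
translates. Given two distinct nonzero elements `r, s` of a codeword `W = g·U`,
`W` is the unique element of the orbit containing both `r` and `s`. -/
theorem good_orbit_erasure_decoding
    (v : ℕ) (hv : 3 ≤ v)
    (K F : Type*) [Field K] [Fintype K] [Field F] [Fintype F] [Algebra K F]
    (hq : Fintype.card K = 2) (hdim : finrank K F = v)
    (U : Submodule K F) (hU : finrank K ↥U = 3)
    (hgood : ∀ g : Fˣ, Submodule.map (LinearMap.mulLeft K (g : F)) U ≠ U →
      finrank K ↥(U ⊓ Submodule.map (LinearMap.mulLeft K (g : F)) U) ≤ 1)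
    (hquot : ∀ u₁ ∈ U, ∀ u₂ ∈ U, ∀ u₃ ∈ U, ∀ u₄ ∈ U,
      u₁ ≠ 0 → u₂ ≠ 0 → u₃ ≠ 0 → u₄ ≠ 0 → u₁ ≠ u₂ → u₃ ≠ u₄ →
      u₁ / u₂ = u₃ / u₄ → u₁ = u₃ ∧ u₂ = u₄)
    (g : Fˣ) (W : Submodule K F)
    (hW : W = Submodule.map (LinearMap.mulLeft K (g : F)) U)
    (r s : F) (hr : r ∈ W) (hs : s ∈ W)
    (hr0 : r ≠ 0) (hs0 : s ≠ 0) (hrs : r ≠ s) :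
    ∃! W' : Submodule K F,
      (∃ h : Fˣ, W' = Submodule.map (LinearMap.mulLeft K (h : F)) U) ∧
      r ∈ W' ∧ s ∈ W' := by
  have hFin : Module.Finite K F := Module.Finite.of_finite
  refine ⟨W, ⟨⟨g, hW⟩, hr, hs⟩, ?_⟩
  rintro W' ⟨⟨h, hW'⟩, hrW', hsW'⟩
  by_contra hne
  set u : Fˣ := g⁻¹ * h with hu
  -- the translate u • U is not U
  have hmap : Submodule.map (LinearMap.mulLeft K ((u : F))) U ≠ U := by
    intro heq
    apply hne
    have : Submodule.map (LinearMap.mulLeft K ((g : F)))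
        (Submodule.map (LinearMap.mulLeft K ((u : F))) U)
        = Submodule.map (LinearMap.mulLeft K ((g : F))) U := by rw [heq]
    rw [← Submodule.map_comp, ← LinearMap.mulLeft_mul] at this
    have hgu : (g : F) * (u : F) = (h : F) := by
      rw [hu]; push_cast; field_simp
    rw [hgu] at this
    rw [hW', hW, this]
  have hle := hgood u hmap
  -- x and y lie in the intersection
  set x : F := (g⁻¹ : Fˣ) * r with hx
  set y : F := (g⁻¹ : Fˣ) * s with hy
  have hxU : x ∈ U := by
    rw [hW] at hr
    obtain ⟨a, haU, ha⟩ := hr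
    have : x = a := by
      rw [hx, ← ha]; simp [LinearMap.mulLeft_apply, ← mul_assoc]
    rwa [this]
  have hyU : y ∈ U := by
    rw [hW] at hs
    obtain ⟨a, haU, ha⟩ := hs
    have : y = a := by
      rw [hy, ← ha]; simp [LinearMap.mulLeft_apply, ← mul_assoc]
    rwa [this]
  have hxV : x ∈ Submodule.map (LinearMap.mulLeft K ((u : F))) U := by
    rw [hW'] at hrW'
    obtain ⟨a, haU, ha⟩ := hrW'
    exact ⟨a, haU, by
      simp only [LinearMap.mulLeft_apply] at ha ⊢
      rw [hx, ← ha, hu]; push_cast; ring⟩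
  have hyV : y ∈ Submodule.map (LinearMap.mulLeft K ((u : F))) U := by
    rw [hW'] at hsW'
    obtain ⟨a, haU, ha⟩ := hsW'
    exact ⟨a, haU, by
      simp only [LinearMap.mulLeft_apply] at ha ⊢
      rw [hy, ← ha, hu]; push_cast; ring⟩
  have hx0 : x ≠ 0 := by
    rw [hx]; exact mul_ne_zero (Units.ne_zero _) hr0
  have hy0 : y ≠ 0 := by
    rw [hy]; exact mul_ne_zero (Units.ne_zero _) hs0
  have hxy : x ≠ y := by
    rw [hx, hy]
    intro hcon
    exact hrs (mul_left_cancel₀ (Units.ne_zero (g⁻¹)) hcon)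
  -- x, y are linearly independent over GF(2)
  have hli : LinearIndependent K ![x, y] := by
    rw [LinearIndependent.pair_iff]
    intro a b hab
    rcases card_two_eq_zero_or_one hq a with ha | ha <;>
      rcases card_two_eq_zero_or_one hq b with hb | hb
    · exact ⟨ha, hb⟩
    · exfalso; apply hy0
      rw [ha, hb, zero_smul, one_smul, zero_add] at hab; exact hab
    · exfalso; apply hx0
      rw [ha, hb, zero_smul, one_smul, add_zero] at hab; exact hab
    · exfalso
      rw [ha, hb, one_smul, one_smul] at hab
      apply hxy
      have h2 : y + y = 0 := by
        have := card_two_one_add_one hq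
        calc y + y = ((1 : K) + 1) • y := by rw [add_smul, one_smul]
          _ = 0 := by rw [this, zero_smul]
      linear_combination hab - h2
  have hspan : Submodule.span K {x, y} ≤ U ⊓ Submodule.map (LinearMap.mulLeft K ((u : F))) U := by
    rw [Submodule.span_le]
    rintro z (rfl | rfl)
    · exact ⟨hxU, hxV⟩
    · exact ⟨hyU, hyV⟩
  have hrange : Set.range ![x, y] = ({x, y} : Set F) := by
    simp [Matrix.range_cons, Matrix.range_empty]
    exact Set.pair_comm y x
  have h2 : finrank K ↥(Submodule.span K ({x, y} : Set F)) = 2 := by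
    have h3 := finrank_span_eq_card (R := K) hli
    rw [hrange] at h3
    simpa using h3
  have := Submodule.finrank_mono hspan
  omega
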